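/- Let d ≥ 1 and let μ be a probability measure on ℝ^d with finite fourth moment (∫‖x‖₂⁴ dμ(x) < ∞). Then the largest eigenvalue of the fourth moment operator satisfies λ₁(T_μ) ≥ (1/d) · Σ_{i=1}^{d(d+1)/2} λ_i(T_μ), i.e., λ₁(T_μ) is at least d/2 times the average of all d(d+1)/2 eigenvalues of T_μ. -/

import Mathlib

open MeasureTheory
open scoped ENNReal RealInnerProductSpace Classical

noncomputable section

/-- The outer product `x xᵀ` of a vector in Euclidean space, as a matrix. -/
def outer {d : ℕ} (x : EuclideanSpace ℝ (Fin d)) : Matrix (Fin d) (Fin d) ℝ :=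
  Matrix.of fun i j => x i * x j

/-- The trace inner product `⟨A, B⟩ = Tr (A B)` on symmetric matrices. -/
def minner {d : ℕ} (A B : Matrix (Fin d) (Fin d) ℝ) : ℝ :=
  Matrix.trace (A * B)

/-- The Frobenius norm of a matrix. -/
def frobNorm {d : ℕ} (M : Matrix (Fin d) (Fin d) ℝ) : ℝ :=
  Real.sqrt (∑ i, ∑ j, (M i j) ^ 2)

/-- Entrywise integral of a matrix-valued function. -/
def mIntegral {d : ℕ} (μ : Measure (EuclideanSpace ℝ (Fin d)))
    (F : EuclideanSpace ℝ (Fin d) → Matrix (Fin d) (Fin d) ℝ) :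
    Matrix (Fin d) (Fin d) ℝ :=
  Matrix.of fun i j => ∫ x, F x i j ∂μ

/-- The fourth moment operator `T_μ (A) = ∫ ⟨A, xxᵀ⟩ xxᵀ dμ(x)`. -/
def fourthMomentOp {d : ℕ} (μ : Measure (EuclideanSpace ℝ (Fin d)))
    (A : Matrix (Fin d) (Fin d) ℝ) : Matrix (Fin d) (Fin d) ℝ :=
  mIntegral μ (fun x => minner A (outer x) • outer x)

/-- The second moment matrix `B = ∫ xxᵀ dμ(x)`. -/
def secondMoment {d : ℕ} (μ : Measure (EuclideanSpace ℝ (Fin d))) :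
    Matrix (Fin d) (Fin d) ℝ :=
  mIntegral μ outer

/-- `lam : ℕ → ℝ` lists the eigenvalues (with multiplicity) of the fourth moment operator
`T_μ`, viewed as an operator on the `d(d+1)/2`-dimensional inner product space of symmetric
matrices, in descending order, padded by `0` beyond index `d(d+1)/2`. -/
def IsEigenSeq {d : ℕ} (μ : Measure (EuclideanSpace ℝ (Fin d))) (lam : ℕ → ℝ) : Prop :=
  Antitone lam ∧ (∀ i, d * (d + 1) / 2 ≤ i → lam i = 0) ∧
  ∃ b : Fin (d * (d + 1) / 2) → Matrix (Fin d) (Fin d) ℝ,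
    (∀ i, (b i).IsSymm) ∧
    (∀ i j, minner (b i) (b j) = if i = j then 1 else 0) ∧
    (∀ A : Matrix (Fin d) (Fin d) ℝ, A.IsSymm → A ∈ Submodule.span ℝ (Set.range b)) ∧
    (∀ i : Fin (d * (d + 1) / 2), fourthMomentOp μ (b i) = lam i • b i)

/-- The second order separation parameter `s(μ)`. -/
def sep {d : ℕ} (μ : Measure (EuclideanSpace ℝ (Fin d))) : ℝ :=
  (1 / 2) * sSup { r : ℝ | ∃ μ₁ μ₂ : Measure (EuclideanSpace ℝ (Fin d)),
    IsProbabilityMeasure μ₁ ∧ IsProbabilityMeasure μ₂ ∧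
    μ = (2 : ℝ≥0∞)⁻¹ • μ₁ + (2 : ℝ≥0∞)⁻¹ • μ₂ ∧
    r = frobNorm (secondMoment μ₁ - secondMoment μ₂) }

/-- The standard Gaussian measure `N(0, I)` on `ℝ^d`. -/
def stdGaussian (d : ℕ) : Measure (EuclideanSpace ℝ (Fin d)) :=
  (Measure.pi fun _ : Fin d => ProbabilityTheory.gaussianReal 0 1).map
    (MeasurableEquiv.toLp 2 (Fin d → ℝ))

/-- The old Mathlib `Matrix.PosSemidef.sqrt`, spelled out. -/
def psdSqrtOld {d : ℕ} {B : Matrix (Fin d) (Fin d) ℝ} (hB : B.PosSemidef) :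
    Matrix (Fin d) (Fin d) ℝ :=
  (hB.1.eigenvectorUnitary : Matrix (Fin d) (Fin d) ℝ) *
    Matrix.diagonal ((↑) ∘ (√·) ∘ hB.1.eigenvalues) *
    (star (hB.1.eigenvectorUnitary : Matrix (Fin d) (Fin d) ℝ))

/-- The centered Gaussian measure `N(0, B)` on `ℝ^d` with positive semidefinite
covariance matrix `B`, obtained as the pushforward of `N(0, I)` by `B^{1/2}`. -/
def gaussianCov {d : ℕ} (B : Matrix (Fin d) (Fin d) ℝ) :
    Measure (EuclideanSpace ℝ (Fin d)) :=
  if hB : B.PosSemidef then (stdGaussian d).map (fun x => Matrix.toEuclideanLin (psdSqrtOld hB) x)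
  else 0

/-- The positive semidefinite square root `B^{1/2}` of a positive semidefinite matrix. -/
def psdSqrt {d : ℕ} (B : Matrix (Fin d) (Fin d) ℝ) : Matrix (Fin d) (Fin d) ℝ :=
  if hB : B.PosSemidef then psdSqrtOld hB else 0

namespace Aux
variable {d : ℕ}

lemma minner_eq_sum (A B : Matrix (Fin d) (Fin d) ℝ) :
    minner A B = ∑ i, ∑ j, A i j * B j i := by
  simp [minner, Matrix.trace, Matrix.mul_apply, Matrix.diag]

lemma minner_comm (A B : Matrix (Fin d) (Fin d) ℝ) : minner A B = minner B A :=
  Matrix.trace_mul_comm A B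

lemma minner_smul_left (c : ℝ) (A B : Matrix (Fin d) (Fin d) ℝ) :
    minner (c • A) B = c * minner A B := by
  simp [minner, Matrix.smul_mul]

lemma minner_sum_left {N : ℕ} (c : Fin (d * (d + 1) / 2) → ℝ) (b : Fin (d * (d + 1) / 2) → Matrix (Fin d) (Fin d) ℝ)
    (M : Matrix (Fin d) (Fin d) ℝ) :
    minner (∑ i, c i • b i) M = ∑ i, c i * minner (b i) M := by
  simp [minner, Matrix.sum_mul, Matrix.smul_mul]

lemma abs_coord (x : EuclideanSpace ℝ (Fin d)) (i : Fin d) : |x i| ≤ ‖x‖ := by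
  rw [EuclideanSpace.norm_eq]
  have h1 : |x i| = Real.sqrt (‖x i‖ ^ 2) := by
    rw [Real.sqrt_sq_eq_abs]; simp
  rw [h1]
  apply Real.sqrt_le_sqrt
  exact Finset.single_le_sum (f := fun j => ‖x j‖ ^ 2) (fun j _ => by positivity) (Finset.mem_univ i)

lemma continuous_coord (i : Fin d) : Continuous fun x : EuclideanSpace ℝ (Fin d) => x i :=
  (continuous_apply i).comp (PiLp.continuous_ofLp 2 fun _ : Fin d => ℝ)

lemma continuous_minner_outer (A : Matrix (Fin d) (Fin d) ℝ) :
    Continuous fun x : EuclideanSpace ℝ (Fin d) => minner A (outer x) := by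
  simp only [minner_eq_sum]
  apply continuous_finset_sum; intro i _
  apply continuous_finset_sum; intro j _
  exact continuous_const.mul ((continuous_coord j).mul (continuous_coord i))

lemma abs_minner_outer_le (A : Matrix (Fin d) (Fin d) ℝ) (x : EuclideanSpace ℝ (Fin d)) :
    |minner A (outer x)| ≤ (∑ i, ∑ j, |A i j|) * ‖x‖ ^ 2 := by
  rw [minner_eq_sum, Finset.sum_mul]
  refine (Finset.abs_sum_le_sum_abs _ _).trans (Finset.sum_le_sum fun i _ => ?_)
  rw [Finset.sum_mul]
  refine (Finset.abs_sum_le_sum_abs _ _).trans (Finset.sum_le_sum fun j _ => ?_)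
  have : |A i j * outer x j i| = |A i j| * (|x j| * |x i|) := by
    simp [outer, abs_mul]
  rw [this, sq]
  exact mul_le_mul_of_nonneg_left
    (mul_le_mul (abs_coord x j) (abs_coord x i) (abs_nonneg _) (norm_nonneg _)) (abs_nonneg _)

lemma integrable_mul {μ : Measure (EuclideanSpace ℝ (Fin d))}
    (h4 : Integrable (fun x => ‖x‖ ^ 4) μ)
    (A C : Matrix (Fin d) (Fin d) ℝ) :
    Integrable (fun x => minner A (outer x) * minner C (outer x)) μ := by
  set CA := ∑ i, ∑ j, |A i j| with hCA
  set CC := ∑ i, ∑ j, |C i j| with hCC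
  refine Integrable.mono' (h4.const_mul (CA * CC))
    (((continuous_minner_outer A).mul (continuous_minner_outer C)).aestronglyMeasurable)
    (Filter.Eventually.of_forall fun x => ?_)
  rw [Real.norm_eq_abs, abs_mul]
  calc |minner A (outer x)| * |minner C (outer x)|
      ≤ (CA * ‖x‖ ^ 2) * (CC * ‖x‖ ^ 2) :=
        mul_le_mul (abs_minner_outer_le A x) (abs_minner_outer_le C x) (abs_nonneg _)
          (by positivity)
    _ = CA * CC * ‖x‖ ^ 4 := by ring

lemma coord_mul_eq_minner (x : EuclideanSpace ℝ (Fin d)) (i j : Fin d) :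
    x i * x j = minner (Matrix.single j i 1) (outer x) := by
  rw [minner_eq_sum]
  simp only [Matrix.single, outer, Matrix.of_apply]
  rw [Finset.sum_eq_single_of_mem j (Finset.mem_univ j)]
  · rw [Finset.sum_eq_single_of_mem i (Finset.mem_univ i)]
    · simp [mul_comm]
    · intro b _ hb; simp [hb, Ne.symm hb]
  · intro a _ ha; simp [ha, Ne.symm ha]

lemma norm_sq_eq (x : EuclideanSpace ℝ (Fin d)) : ‖x‖ ^ 2 = ∑ i, x i ^ 2 := by
  rw [EuclideanSpace.norm_eq, Real.sq_sqrt (by positivity)]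
  simp [sq_abs]

lemma minner_fourthMomentOp {μ : Measure (EuclideanSpace ℝ (Fin d))}
    (h4 : Integrable (fun x => ‖x‖ ^ 4) μ) (A C : Matrix (Fin d) (Fin d) ℝ) :
    minner (fourthMomentOp μ A) C
      = ∫ x, minner A (outer x) * minner C (outer x) ∂μ := by
  have hint : ∀ i j : Fin d,
      Integrable (fun x => minner A (outer x) * (x i * x j) * C j i) μ := by
    intro i j
    simp_rw [coord_mul_eq_minner]
    exact (integrable_mul h4 A _).mul_const _
  have hentry : ∀ i j : Fin d,
      fourthMomentOp μ A i j = ∫ x, minner A (outer x) * (x i * x j) ∂μ := by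
    intro i j
    simp [fourthMomentOp, mIntegral, outer, smul_eq_mul]
  rw [minner_eq_sum]
  calc (∑ i, ∑ j, fourthMomentOp μ A i j * C j i)
      = ∑ i, ∑ j, ∫ x, minner A (outer x) * (x i * x j) * C j i ∂μ := by
        refine Finset.sum_congr rfl fun i _ => Finset.sum_congr rfl fun j _ => ?_
        rw [hentry, ← integral_mul_const]
    _ = ∫ x, ∑ i, ∑ j, minner A (outer x) * (x i * x j) * C j i ∂μ := by
        rw [integral_finset_sum _ (fun i _ => integrable_finset_sum _ (fun j _ => hint i j))]
        exact Finset.sum_congr rfl fun i _ => (integral_finset_sum _ (fun j _ => hint i j)).symm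
    _ = ∫ x, minner A (outer x) * minner C (outer x) ∂μ := by
        refine integral_congr_ae (Filter.Eventually.of_forall fun x => ?_)
        show (∑ i, ∑ j, minner A (outer x) * (x i * x j) * C j i)
            = minner A (outer x) * minner C (outer x)
        rw [minner_comm C, minner_eq_sum (outer x), Finset.mul_sum]
        refine Finset.sum_congr rfl fun i _ => ?_
        rw [Finset.mul_sum]
        refine Finset.sum_congr rfl fun j _ => ?_
        simp [outer]; ring

end Aux

/-- the largest eigenvalue of `T_μ` is at least `1/d` times the sum of all
`d(d+1)/2` eigenvalues of `T_μ`. -/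
theorem largest_eigenvalue_lower_bound
    (d : ℕ) (hd : 1 ≤ d) (μ : Measure (EuclideanSpace ℝ (Fin d)))
    [IsProbabilityMeasure μ] (h4 : Integrable (fun x => ‖x‖ ^ 4) μ)
    (lam : ℕ → ℝ) (hlam : IsEigenSeq μ lam) :
    (1 / (d : ℝ)) * ∑ i : Fin (d * (d + 1) / 2), lam i ≤ lam 0 := by
  classical
  obtain ⟨hanti, hzero, b, hbsymm, horth, hspan, heig⟩ := hlam
  have hA : ∀ i j : Fin (d * (d + 1) / 2), (∫ x, minner (b i) (outer x) * minner (b j) (outer x) ∂μ)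
      = if i = j then lam i else 0 := by
    intro i j
    rw [← Aux.minner_fourthMomentOp h4, heig i, Aux.minner_smul_left, horth i j]
    by_cases h : i = j <;> simp [h]
  have houter_symm : ∀ x : EuclideanSpace ℝ (Fin d), (outer x).IsSymm := by
    intro x; unfold Matrix.IsSymm; ext i j; simp [outer, mul_comm]
  have hpars : ∀ x : EuclideanSpace ℝ (Fin d),
      (∑ i : Fin (d * (d + 1) / 2), minner (b i) (outer x) * minner (b i) (outer x)) = ‖x‖ ^ 4 := by
    intro x
    obtain ⟨c, hc⟩ := (Submodule.mem_span_range_iff_exists_fun ℝ).mp (hspan (outer x) (houter_symm x))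
    have hcg : ∀ i, minner (b i) (outer x) = c i := by
      intro i
      calc minner (b i) (outer x) = minner (outer x) (b i) := Aux.minner_comm _ _
        _ = minner (∑ j, c j • b j) (b i) := by rw [hc]
        _ = ∑ j, c j * minner (b j) (b i) := Aux.minner_sum_left (N := d * (d + 1) / 2) _ _ _
        _ = c i := by simp [horth]
    have h1 : minner (outer x) (outer x) = ∑ i, c i * c i := by
      calc minner (outer x) (outer x) = minner (∑ i, c i • b i) (outer x) := by rw [hc]
        _ = ∑ i, c i * minner (b i) (outer x) := Aux.minner_sum_left (N := d * (d + 1) / 2) _ _ _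
        _ = ∑ i, c i * c i := Finset.sum_congr rfl fun i _ => by rw [hcg]
    have h2 : minner (outer x) (outer x) = ‖x‖ ^ 4 := by
      rw [Aux.minner_eq_sum]
      have h4' : ‖x‖ ^ 4 = (∑ i, x i ^ 2) * (∑ j, x j ^ 2) := by
        have := Aux.norm_sq_eq x
        nlinarith [this]
      rw [h4', Finset.sum_mul_sum]
      refine Finset.sum_congr rfl fun i _ => Finset.sum_congr rfl fun j _ => ?_
      simp [outer]; ring
    rw [← h2, h1]
    exact Finset.sum_congr rfl fun i _ => by rw [hcg]
  have hC : ∑ i : Fin (d * (d + 1) / 2), lam i = ∫ x, ‖x‖ ^ 4 ∂μ := by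
    calc ∑ i : Fin (d * (d + 1) / 2), lam i
        = ∑ i : Fin (d * (d + 1) / 2), ∫ x, minner (b i) (outer x) * minner (b i) (outer x) ∂μ := by
          refine Finset.sum_congr rfl fun i _ => ?_
          rw [hA i i]; simp
      _ = ∫ x, ∑ i : Fin (d * (d + 1) / 2), minner (b i) (outer x) * minner (b i) (outer x) ∂μ :=
          (integral_finset_sum _ (fun i _ => Aux.integrable_mul h4 _ _)).symm
      _ = ∫ x, ‖x‖ ^ 4 ∂μ := integral_congr_ae (.of_forall fun x => hpars x)
  obtain ⟨e, he⟩ := (Submodule.mem_span_range_iff_exists_fun ℝ).mp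
    (hspan 1 (Matrix.isSymm_one))
  have hone : ∀ x : EuclideanSpace ℝ (Fin d),
      minner (1 : Matrix (Fin d) (Fin d) ℝ) (outer x) = ‖x‖ ^ 2 := by
    intro x
    rw [minner, Matrix.one_mul, Aux.norm_sq_eq]
    simp [Matrix.trace, outer, Matrix.diag, sq]
  have hbone : ∀ i : Fin (d * (d + 1) / 2), minner (b i) (1 : Matrix (Fin d) (Fin d) ℝ) = e i := by
    intro i
    calc minner (b i) (1 : Matrix (Fin d) (Fin d) ℝ) = minner 1 (b i) := Aux.minner_comm _ _
      _ = minner (∑ j, e j • b j) (b i) := by rw [he]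
      _ = ∑ j, e j * minner (b j) (b i) := Aux.minner_sum_left (N := d * (d + 1) / 2) _ _ _
      _ = e i := by simp [horth]
  have hD : ∫ x, ‖x‖ ^ 4 ∂μ = ∑ i : Fin (d * (d + 1) / 2), e i * e i * lam i := by
    calc ∫ x, ‖x‖ ^ 4 ∂μ
        = ∫ x, minner (1 : Matrix (Fin d) (Fin d) ℝ) (outer x)
            * minner (1 : Matrix (Fin d) (Fin d) ℝ) (outer x) ∂μ := by
          refine integral_congr_ae (.of_forall fun x => ?_)
          show ‖x‖ ^ 4 = minner (1 : Matrix (Fin d) (Fin d) ℝ) (outer x)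
              * minner (1 : Matrix (Fin d) (Fin d) ℝ) (outer x)
          rw [hone]; ring
      _ = ∫ x, ∑ i : Fin (d * (d + 1) / 2), ∑ j : Fin (d * (d + 1) / 2),
            e i * e j * (minner (b i) (outer x) * minner (b j) (outer x)) ∂μ := by
          refine integral_congr_ae (.of_forall fun x => ?_)
          show minner (1 : Matrix (Fin d) (Fin d) ℝ) (outer x)
                * minner (1 : Matrix (Fin d) (Fin d) ℝ) (outer x)
              = ∑ i : Fin (d * (d + 1) / 2), ∑ j : Fin (d * (d + 1) / 2),
                e i * e j * (minner (b i) (outer x) * minner (b j) (outer x))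
          calc minner (1 : Matrix (Fin d) (Fin d) ℝ) (outer x) * minner 1 (outer x)
              = minner (∑ i, e i • b i) (outer x) * minner (∑ j, e j • b j) (outer x) := by
                rw [he]
            _ = (∑ i, e i * minner (b i) (outer x)) * (∑ j, e j * minner (b j) (outer x)) := by
                rw [Aux.minner_sum_left (N := d * (d + 1) / 2)]
            _ = ∑ i : Fin (d * (d + 1) / 2), ∑ j : Fin (d * (d + 1) / 2),
                e i * e j * (minner (b i) (outer x) * minner (b j) (outer x)) := by
                rw [Finset.sum_mul_sum]
                exact Finset.sum_congr rfl fun i _ => Finset.sum_congr rfl fun j _ => by ring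
      _ = ∑ i : Fin (d * (d + 1) / 2), ∑ j : Fin (d * (d + 1) / 2),
            e i * e j * ∫ x, minner (b i) (outer x) * minner (b j) (outer x) ∂μ := by
          rw [integral_finset_sum _ (fun i _ => integrable_finset_sum _ (fun j _ =>
            ((Aux.integrable_mul h4 _ _).const_mul _)))]
          refine Finset.sum_congr rfl fun i _ => ?_
          rw [integral_finset_sum _ (fun j _ => (Aux.integrable_mul h4 _ _).const_mul _)]
          exact Finset.sum_congr rfl fun j _ => integral_const_mul _ _
      _ = ∑ i : Fin (d * (d + 1) / 2), e i * e i * lam i := by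
          refine Finset.sum_congr rfl fun i _ => ?_
          rw [Finset.sum_eq_single_of_mem i (Finset.mem_univ i)]
          · rw [hA i i]; simp
          · intro j _ hj
            rw [hA i j, if_neg (Ne.symm hj), mul_zero]
  have hE : ∑ i : Fin (d * (d + 1) / 2), e i * e i = (d : ℝ) := by
    have h11 : minner (1 : Matrix (Fin d) (Fin d) ℝ) 1 = (d : ℝ) := by
      simp [minner, Matrix.trace_one]
    calc ∑ i : Fin (d * (d + 1) / 2), e i * e i
        = ∑ i : Fin (d * (d + 1) / 2), e i * minner (b i) 1 :=
          Finset.sum_congr rfl fun i _ => by rw [hbone]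
      _ = minner (∑ i, e i • b i) 1 := (Aux.minner_sum_left (N := d * (d + 1) / 2) _ _ _).symm
      _ = minner 1 1 := by rw [he]
      _ = (d : ℝ) := h11
  have hF : ∑ i : Fin (d * (d + 1) / 2), e i * e i * lam i ≤ (d : ℝ) * lam 0 := by
    calc ∑ i : Fin (d * (d + 1) / 2), e i * e i * lam i
        ≤ ∑ i : Fin (d * (d + 1) / 2), e i * e i * lam 0 := by
          refine Finset.sum_le_sum fun i _ => ?_
          exact mul_le_mul_of_nonneg_left (hanti (Nat.zero_le _)) (mul_self_nonneg _)
      _ = (d : ℝ) * lam 0 := by rw [← Finset.sum_mul, hE]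
  have hfinal : ∑ i : Fin (d * (d + 1) / 2), lam i ≤ (d : ℝ) * lam 0 := by
    rw [hC, hD]; exact hF
  have hd0 : (0 : ℝ) < d := by exact_mod_cast hd
  rw [one_div, inv_mul_le_iff₀ hd0]
  exact hfinal

end
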